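/- Let A ∈ ℂ^{m×n×p} and W ∈ ℂ^{n×m×p} with rank_M(W *_M A) = rank_M(W) ≤ rank_M(A), and let X be an outer inverse of A with R_M(X) = R_M(W) and N_M(X) = N_M(W). Let γ ∈ ℂ and define Z₀ = γ·W and Z_{j+1} = Z_j *_M Σ_{k=0}^{18} (I_M − A *_M Z_j)^k (the hyperpower iteration of order 19). If ‖mat(A *_M X − A *_M Z₀)‖_F < 1, then for every j ≥ 0, ‖mat(X − Z_j)‖_F ≤ ‖mat(X)‖_F · ‖mat(A *_M X − A *_M Z₀)‖_F^{19^j}; in particular the sequence Z_j converges entrywise to X. -/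

import Mathlib

open Matrix Finset

/-- A third-order tensor in `ℂ^{m×n×p}`, given by its `p` frontal slices. -/
abbrev Tensor (m n p : ℕ) := Fin p → Matrix (Fin m) (Fin n) ℂ

/-- The transform `Â = A ×₃ M` (mode-3 product with `M`). -/
noncomputable def hatT {m n p : ℕ} (M : Matrix (Fin p) (Fin p) ℂ) (A : Tensor m n p) :
    Tensor m n p :=
  fun l => ∑ s, M l s • A s

/-- `mat(A)`: the block-diagonal matrix whose blocks are frontal slices of `A ×₃ M`. -/
noncomputable def matT {m n p : ℕ} (M : Matrix (Fin p) (Fin p) ℂ) (A : Tensor m n p) :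
    Matrix (Fin m × Fin p) (Fin n × Fin p) ℂ :=
  Matrix.blockDiagonal (hatT M A)

/-- The M-product `A *_M B`, determined by `mat(A *_M B) = mat(A)·mat(B)`. -/
noncomputable def mprod {m n k p : ℕ} (M : Matrix (Fin p) (Fin p) ℂ)
    (A : Tensor m n p) (B : Tensor n k p) : Tensor m k p :=
  fun l => ∑ s, M⁻¹ l s • (hatT M A s * hatT M B s)

/-- The conjugate transpose `A^*`, determined by `mat(A^*) = mat(A)^*`. -/
noncomputable def mstar {m n p : ℕ} (M : Matrix (Fin p) (Fin p) ℂ) (A : Tensor m n p) :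
    Tensor n m p :=
  fun l => ∑ s, M⁻¹ l s • (hatT M A s)ᴴ

/-- The identity tensor `I_M ∈ ℂ^{m×m×p}`, determined by `mat(I_M) = I`. -/
noncomputable def idT {p : ℕ} (M : Matrix (Fin p) (Fin p) ℂ) (m : ℕ) : Tensor m m p :=
  fun l => ∑ s, M⁻¹ l s • (1 : Matrix (Fin m) (Fin m) ℂ)

/-- M-product powers of a square tensor. -/
noncomputable def mpow {m p : ℕ} (M : Matrix (Fin p) (Fin p) ℂ) (A : Tensor m m p) :
    ℕ → Tensor m m p
  | 0 => idT M m
  | k + 1 => mprod M A (mpow M A k)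

/-- `R_M(A)`: the column space of `mat(A)`. -/
noncomputable def rangeM {m n p : ℕ} (M : Matrix (Fin p) (Fin p) ℂ) (A : Tensor m n p) :
    Submodule ℂ (Fin m × Fin p → ℂ) :=
  LinearMap.range (matT M A).mulVecLin

/-- `N_M(A)`: the kernel of `mat(A)`. -/
noncomputable def kerM {m n p : ℕ} (M : Matrix (Fin p) (Fin p) ℂ) (A : Tensor m n p) :
    Submodule ℂ (Fin n × Fin p → ℂ) :=
  LinearMap.ker (matT M A).mulVecLin

/-- `rank_M(A) = rank(mat(A))`. -/
noncomputable def rankM {m n p : ℕ} (M : Matrix (Fin p) (Fin p) ℂ) (A : Tensor m n p) : ℕ :=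
  (matT M A).rank

/-- The first `s` lateral slices `Q(:,1:s,:)`. -/
def latSlice {n s p : ℕ} (hsn : s ≤ n) (Q : Tensor n n p) : Tensor n s p :=
  fun l => (Q l).submatrix id (Fin.castLE hsn)

/-- The first `s` horizontal slices `R(1:s,:,:)`. -/
def horSlice {n m s p : ℕ} (hsn : s ≤ n) (R : Tensor n m p) : Tensor s m p :=
  fun l => (R l).submatrix (Fin.castLE hsn) id

/-- Frobenius norm of a complex matrix. -/
noncomputable def frobNorm {α β : Type*} [Fintype α] [Fintype β] (X : Matrix α β ℂ) : ℝ :=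
  Real.sqrt (∑ i, ∑ j, ‖X i j‖ ^ 2)
section lemmas
variable {m n k p : ℕ} {M : Matrix (Fin p) (Fin p) ℂ}

lemma hatT_sub (A B : Tensor m n p) : hatT M (A - B) = hatT M A - hatT M B := by
  funext l
  simp [hatT, smul_sub, Finset.sum_sub_distrib]

lemma matT_sub (A B : Tensor m n p) : matT M (A - B) = matT M A - matT M B := by
  rw [matT, hatT_sub, blockDiagonal_sub]; rfl

lemma matT_smul (γ : ℂ) (A : Tensor m n p) : matT M (γ • A) = γ • matT M A := by
  have : hatT M (γ • A) = γ • hatT M A := by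
    funext l
    simp [hatT, smul_comm γ, Finset.smul_sum]
  rw [matT, this, blockDiagonal_smul]; rfl

lemma matT_add (A B : Tensor m n p) : matT M (A + B) = matT M A + matT M B := by
  have : hatT M (A + B) = hatT M A + hatT M B := by
    funext l
    simp [hatT, smul_add, Finset.sum_add_distrib]
  rw [matT, this, blockDiagonal_add]; rfl

lemma matT_sum {ι : Type*} (s : Finset ι) (F : ι → Tensor m n p) :
    matT M (∑ i ∈ s, F i) = ∑ i ∈ s, matT M (F i) := by
  classical
  induction s using Finset.induction_on with
  | empty =>
      simp only [Finset.sum_empty]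
      have : hatT M (0 : Tensor m n p) = 0 := by funext l; simp [hatT]
      rw [matT, this, blockDiagonal_zero]
  | insert _ _ h ih => rw [Finset.sum_insert h, Finset.sum_insert h, matT_add, ih]

lemma hatT_mprod (hM : IsUnit M.det) (A : Tensor m n p) (B : Tensor n k p) (l : Fin p) :
    hatT M (mprod M A B) l = hatT M A l * hatT M B l := by
  have h1 : M * M⁻¹ = 1 := Matrix.mul_nonsing_inv M hM
  show (∑ s, M l s • ∑ t, M⁻¹ s t • (hatT M A t * hatT M B t)) = _
  simp_rw [Finset.smul_sum, smul_smul]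
  rw [Finset.sum_comm]
  simp_rw [← Finset.sum_smul]
  have h2 : ∀ t, (∑ s, M l s * M⁻¹ s t) = (1 : Matrix (Fin p) (Fin p) ℂ) l t := by
    intro t; rw [← h1]; rfl
  simp_rw [h2, Matrix.one_apply, ite_smul, one_smul, zero_smul,
    Finset.sum_ite_eq, Finset.mem_univ, if_true]

lemma matT_mprod (hM : IsUnit M.det) (A : Tensor m n p) (B : Tensor n k p) :
    matT M (mprod M A B) = matT M A * matT M B := by
  rw [matT, matT, matT, ← blockDiagonal_mul]
  exact congrArg _ (funext (hatT_mprod hM A B))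

lemma matT_idT (hM : IsUnit M.det) : matT M (idT M m) = 1 := by
  have h1 : M * M⁻¹ = 1 := Matrix.mul_nonsing_inv M hM
  have : hatT M (idT M m) = fun _ => (1 : Matrix (Fin m) (Fin m) ℂ) := by
    funext l
    show (∑ s, M l s • ∑ t, M⁻¹ s t • (1 : Matrix (Fin m) (Fin m) ℂ)) = _
    simp_rw [Finset.smul_sum, smul_smul]
    rw [Finset.sum_comm]
    simp_rw [← Finset.sum_smul]
    have h2 : ∀ t, (∑ s, M l s * M⁻¹ s t) = (1 : Matrix (Fin p) (Fin p) ℂ) l t := by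
      intro t; rw [← h1]; rfl
    simp [h2, Matrix.one_apply, ite_smul]
  rw [matT, this]
  exact blockDiagonal_one

lemma matT_mpow (hM : IsUnit M.det) (A : Tensor m m p) (t : ℕ) :
    matT M (mpow M A t) = (matT M A) ^ t := by
  induction t with
  | zero => rw [mpow, matT_idT hM, pow_zero]
  | succ t ih => rw [mpow, matT_mprod hM, ih, pow_succ']

lemma hatT_entries_recover (hM : IsUnit M.det) (B : Tensor m n p) (s : Fin p) :
    (∑ l, M⁻¹ s l • hatT M B l) = B s := by
  have h1 : M⁻¹ * M = 1 := Matrix.nonsing_inv_mul M hM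
  show (∑ l, M⁻¹ s l • ∑ t, M l t • B t) = _
  simp_rw [Finset.smul_sum, smul_smul]
  rw [Finset.sum_comm]
  simp_rw [← Finset.sum_smul]
  have h2 : ∀ t, (∑ l, M⁻¹ s l * M l t) = (1 : Matrix (Fin p) (Fin p) ℂ) s t := by
    intro t; rw [← h1]; rfl
  simp_rw [h2, Matrix.one_apply, ite_smul, one_smul, zero_smul,
    Finset.sum_ite_eq, Finset.mem_univ, if_true]

end lemmas

section ringlemmas
variable {R : Type*} [Ring R]

lemma geom_trick (T : R) (N : ℕ) :
    T * ∑ k ∈ Finset.range N, (1 - T) ^ k = 1 - (1 - T) ^ N := by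
  have h2 : (-T) * ∑ k ∈ Finset.range N, (1 - T) ^ k = (1 - T) ^ N - 1 := by
    have h : (1 - T) - 1 = -T := by abel
    rw [← h]; exact mul_geom_sum _ _
  have := congrArg Neg.neg h2
  rw [neg_mul, neg_neg, neg_sub] at this
  exact this

lemma mul_pow_succ_eq_zero {a b : R} (hab : a * b = 0) (t : ℕ) : a * b ^ (t + 1) = 0 := by
  rw [pow_succ', ← mul_assoc, hab, zero_mul]

lemma add_pow_eq_of_mul_eq_zero {a b : R} (hab : a * b = 0) (hba : b * a = 0) :
    ∀ t, (a + b) ^ (t + 1) = a ^ (t + 1) + b ^ (t + 1) := by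
  intro t
  induction t with
  | zero => simp
  | succ t ih =>
      rw [pow_succ', ih, mul_add, add_mul, add_mul, mul_pow_succ_eq_zero hab,
        mul_pow_succ_eq_zero hba, ← pow_succ', ← pow_succ']
      abel

lemma idem_pow_succ {e : R} (he : e * e = e) : ∀ t, e ^ (t + 1) = e := by
  intro t
  induction t with
  | zero => simp
  | succ t ih => rw [pow_succ, ih, he]

lemma one_sub_pow_mul_one_sub {T P : R} (hTP : T * P = T) :
    ∀ t, (1 - T) ^ t * (1 - P) = 1 - P := by
  intro t
  induction t with
  | zero => simp
  | succ t ih =>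
      rw [pow_succ, mul_assoc]
      have : (1 - T) * (1 - P) = 1 - P := by
        have : (1 - T) * (1 - P) = 1 - P - T + T * P := by noncomm_ring
        rw [this, hTP]; abel
      rw [this, ih]

/-- The core induction for the hyperpower iteration of order `N`. -/
lemma hpi_key {I J : Type*} [Fintype I] [Fintype J] [DecidableEq I]
    (A : Matrix I J ℂ) (X : Matrix J I ℂ) (Z : ℕ → Matrix J I ℂ) {N : ℕ} (hN : 1 ≤ N)
    (hout : X * (A * X) = X)
    (h10 : X * (A * Z 0) = Z 0) (h20 : Z 0 * (A * X) = Z 0)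
    (hrec : ∀ j, Z (j + 1) = Z j * ∑ k ∈ Finset.range N, (1 - A * Z j) ^ k) :
    ∀ j, X * (A * Z j) = Z j ∧ Z j * (A * X) = Z j ∧
      A * X - A * Z j = (A * X - A * Z 0) ^ (N ^ j) := by
  have hPP : (A * X) * (A * X) = A * X := by
    rw [Matrix.mul_assoc A X (A * X), hout]
  intro j
  induction j with
  | zero => exact ⟨h10, h20, by rw [pow_zero, pow_one]⟩
  | succ j ih =>
      obtain ⟨h1, h2, h3⟩ := ih
      set P := A * X with hP
      set T := A * Z j with hT
      have hTP : T * P = T := by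
        rw [hT, hP, Matrix.mul_assoc A (Z j) (A * X), h2]
      have hPT : P * T = T := by
        rw [hT, hP, Matrix.mul_assoc A X (A * Z j), h1]
      set S := ∑ k ∈ Finset.range N, (1 - T) ^ k with hS
      have hAZ : A * Z (j + 1) = 1 - (1 - T) ^ N := by
        rw [hrec j, ← Matrix.mul_assoc, ← hT, ← hS, geom_trick]
      refine ⟨?_, ?_, ?_⟩
      · rw [hrec j, ← Matrix.mul_assoc A (Z j), ← Matrix.mul_assoc X, ← Matrix.mul_assoc X,
          Matrix.mul_assoc X A (Z j), h1]
      · have hS1P : S * (1 - P) = (N : ℕ) • (1 - P) := by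
          rw [hS, Finset.sum_mul]
          rw [Finset.sum_congr rfl fun k _ => one_sub_pow_mul_one_sub hTP k]
          simp
          rw [mul_sub, mul_one]
        have hz : Z (j + 1) * (1 - P) = 0 := by
          rw [hrec j, ← hS, Matrix.mul_assoc, hS1P, Matrix.mul_smul]
          have hzz : Z j * (1 - P) = 0 := by
            rw [Matrix.mul_sub, Matrix.mul_one, h2, sub_self]
          rw [hzz, smul_zero]
        rw [Matrix.mul_sub, Matrix.mul_one, sub_eq_zero] at hz
        exact hz.symm
      · obtain ⟨N', rfl⟩ : ∃ N', N = N' + 1 := ⟨N - 1, (Nat.succ_pred_eq_of_pos hN).symm⟩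
        have hE1P : (P - T) * (1 - P) = 0 := by
          have hh : (P - T) * (1 - P) = (P - P * P) - (T - T * P) := by noncomm_ring
          rw [hh, hPP, hTP]; abel
        have h1PE : (1 - P) * (P - T) = 0 := by
          have hh : (1 - P) * (P - T) = (P - P * P) - (T - P * T) := by noncomm_ring
          rw [hh, hPP, hPT]; abel
        have hidem : (1 - P) * (1 - P) = 1 - P := by
          have hh : (1 - P) * (1 - P) = 1 - P - P + P * P := by noncomm_ring
          rw [hh, hPP]; abel
        have hpow : (1 - T) ^ (N' + 1) = (1 - P) + (P - T) ^ (N' + 1) := by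
          rw [show (1 - T) = (1 - P) + (P - T) by abel,
            add_pow_eq_of_mul_eq_zero h1PE hE1P, idem_pow_succ hidem]
        rw [hAZ, hpow, h3, ← pow_mul, ← pow_succ]
        abel
section normlemmas

attribute [local instance] Matrix.frobeniusSeminormedAddCommGroup

variable {α β γ' : Type*} [Fintype α] [Fintype β] [Fintype γ']

lemma frobNorm_eq_norm (X : Matrix α β ℂ) : frobNorm X = ‖X‖ := by
  rw [Matrix.frobenius_norm_def, frobNorm, Real.sqrt_eq_rpow]
  congr 1
  refine Finset.sum_congr rfl fun i _ => Finset.sum_congr rfl fun j _ => ?_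
  rw [← Real.rpow_natCast (‖X i j‖) 2]
  norm_num

lemma frobNorm_nonneg (X : Matrix α β ℂ) : 0 ≤ frobNorm X := Real.sqrt_nonneg _

lemma frobNorm_mul_le (X : Matrix α β ℂ) (Y : Matrix β γ' ℂ) :
    frobNorm (X * Y) ≤ frobNorm X * frobNorm Y := by
  simp only [frobNorm_eq_norm]
  exact Matrix.frobenius_norm_mul X Y

lemma frobNorm_pow_le [DecidableEq β] (E : Matrix β β ℂ) (t : ℕ) :
    frobNorm (E ^ (t + 1)) ≤ frobNorm E ^ (t + 1) := by
  induction t with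
  | zero => simp
  | succ t ih =>
      calc frobNorm (E ^ (t + 2)) = frobNorm (E * E ^ (t + 1)) := by rw [← pow_succ']
        _ ≤ frobNorm E * frobNorm (E ^ (t + 1)) := frobNorm_mul_le _ _
        _ ≤ frobNorm E * frobNorm E ^ (t + 1) :=
            mul_le_mul_of_nonneg_left ih (frobNorm_nonneg E)
        _ = frobNorm E ^ (t + 2) := by rw [← pow_succ']

lemma entry_le_frobNorm (X : Matrix α β ℂ) (i : α) (j : β) : ‖X i j‖ ≤ frobNorm X := by
  rw [frobNorm, show ‖X i j‖ = Real.sqrt (‖X i j‖ ^ 2) from (Real.sqrt_sq (norm_nonneg _)).symm]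
  apply Real.sqrt_le_sqrt
  calc ‖X i j‖ ^ 2 ≤ ∑ j', ‖X i j'‖ ^ 2 :=
        Finset.single_le_sum (f := fun j' => ‖X i j'‖ ^ 2)
          (fun _ _ => sq_nonneg _) (Finset.mem_univ j)
    _ ≤ ∑ i', ∑ j', ‖X i' j'‖ ^ 2 :=
        Finset.single_le_sum (f := fun i' => ∑ j', ‖X i' j'‖ ^ 2)
          (fun i' _ => Finset.sum_nonneg fun _ _ => sq_nonneg _) (Finset.mem_univ i)

omit [Fintype α] in
lemma eq_of_mulVec_eq [DecidableEq β] {X Y : Matrix α β ℂ}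
    (h : ∀ v, X *ᵥ v = Y *ᵥ v) : X = Y := by
  ext i j
  have := congrFun (h (Pi.single j 1)) i
  simpa using this

end normlemmas

/-- Theorem 4.2 (convergence of M-HPI19): with initial guess `Z₀ = γ·W` and
`‖mat(A *_M X − A *_M Z₀)‖_F < 1`, the iterates converge to the outer inverse `X`
with the stated error bound. -/
theorem hpi19_convergence {m n p : ℕ}
    (M : Matrix (Fin p) (Fin p) ℂ) (hM : IsUnit M.det)
    (A : Tensor m n p) (W X : Tensor n m p)
    (hr1 : rankM M (mprod M W A) = rankM M W) (hr2 : rankM M W ≤ rankM M A)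
    (hout : mprod M X (mprod M A X) = X)
    (hRX : rangeM M X = rangeM M W) (hNX : kerM M X = kerM M W)
    (γ : ℂ) (Z : ℕ → Tensor n m p)
    (hZ0 : Z 0 = γ • W)
    (hZ : ∀ j, Z (j + 1) =
      mprod M (Z j) (∑ k ∈ Finset.range 19, mpow M (idT M m - mprod M A (Z j)) k))
    (hinit : frobNorm (matT M (mprod M A X - mprod M A (Z 0))) < 1) :
    (∀ j, frobNorm (matT M (X - Z j)) ≤
        frobNorm (matT M X) *
          frobNorm (matT M (mprod M A X - mprod M A (Z 0))) ^ (19 ^ j)) ∧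
      ∀ (l : Fin p) (i : Fin n) (j : Fin m),
        Filter.Tendsto (fun t => Z t l i j) Filter.atTop (nhds (X l i j)) := by
  classical
  set 𝒜 := matT M A with h𝒜
  set 𝒳 := matT M X with h𝒳
  set 𝒲 := matT M W with h𝒲
  -- matrix form of the data
  have hmatZ0 : matT M (Z 0) = γ • 𝒲 := by rw [hZ0, matT_smul]
  have hmatZ : ∀ j, matT M (Z (j + 1)) =
      matT M (Z j) * ∑ k ∈ Finset.range 19, (1 - 𝒜 * matT M (Z j)) ^ k := by
    intro j
    rw [hZ j, matT_mprod hM, matT_sum]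
    congr 1
    refine Finset.sum_congr rfl fun k _ => ?_
    rw [matT_mpow hM, matT_sub, matT_idT hM, matT_mprod hM]
  have hmout : 𝒳 * (𝒜 * 𝒳) = 𝒳 := by
    have h := congrArg (matT M) hout
    rwa [matT_mprod hM, matT_mprod hM] at h
  have hR : LinearMap.range 𝒳.mulVecLin = LinearMap.range 𝒲.mulVecLin := hRX
  have hN : LinearMap.ker 𝒳.mulVecLin = LinearMap.ker 𝒲.mulVecLin := hNX
  -- range condition:  𝒳 * (𝒜 * 𝒲) = 𝒲
  have hXAW : 𝒳 * (𝒜 * 𝒲) = 𝒲 := by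
    apply eq_of_mulVec_eq
    intro v
    have h1 : 𝒲 *ᵥ v ∈ LinearMap.range 𝒳.mulVecLin := by
      rw [hR]; exact ⟨v, Matrix.mulVecLin_apply _ _⟩
    obtain ⟨u, hu⟩ := h1
    rw [Matrix.mulVecLin_apply] at hu
    calc (𝒳 * (𝒜 * 𝒲)) *ᵥ v = 𝒳 *ᵥ (𝒜 *ᵥ (𝒲 *ᵥ v)) := by
          simp [Matrix.mul_assoc]
      _ = 𝒳 *ᵥ (𝒜 *ᵥ (𝒳 *ᵥ u)) := by rw [hu]
      _ = (𝒳 * (𝒜 * 𝒳)) *ᵥ u := by simp [Matrix.mul_assoc]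
      _ = 𝒳 *ᵥ u := by rw [hmout]
      _ = 𝒲 *ᵥ v := hu
  -- kernel condition:  𝒲 * (𝒜 * 𝒳) = 𝒲
  have hWAX : 𝒲 * (𝒜 * 𝒳) = 𝒲 := by
    apply eq_of_mulVec_eq
    intro v
    have hker : ((𝒜 * 𝒳) *ᵥ v - v) ∈ LinearMap.ker 𝒳.mulVecLin := by
      rw [LinearMap.mem_ker, map_sub, Matrix.mulVecLin_apply, Matrix.mulVecLin_apply,
        Matrix.mulVec_mulVec, hmout, sub_self]
    rw [hN, LinearMap.mem_ker, map_sub, Matrix.mulVecLin_apply, Matrix.mulVecLin_apply,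
      sub_eq_zero] at hker
    calc (𝒲 * (𝒜 * 𝒳)) *ᵥ v = 𝒲 *ᵥ ((𝒜 * 𝒳) *ᵥ v) := by rw [Matrix.mulVec_mulVec]
      _ = 𝒲 *ᵥ v := hker
  -- initial conditions for the key induction
  have h10 : 𝒳 * (𝒜 * matT M (Z 0)) = matT M (Z 0) := by
    rw [hmatZ0, Matrix.mul_smul, Matrix.mul_smul, hXAW]
  have h20 : matT M (Z 0) * (𝒜 * 𝒳) = matT M (Z 0) := by
    rw [hmatZ0, Matrix.smul_mul, hWAX]
  have hkey := hpi_key 𝒜 𝒳 (fun j => matT M (Z j)) (N := 19)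
    (by norm_num) hmout h10 h20 hmatZ
  have hdiff : ∀ j, matT M (X - Z j) =
      𝒳 * (𝒜 * 𝒳 - 𝒜 * matT M (Z 0)) ^ (19 ^ j) := by
    intro j
    obtain ⟨h1, h2, h3⟩ := hkey j
    rw [matT_sub]
    calc 𝒳 - matT M (Z j) = 𝒳 * (𝒜 * 𝒳) - 𝒳 * (𝒜 * matT M (Z j)) := by rw [hmout, h1]
      _ = 𝒳 * (𝒜 * 𝒳 - 𝒜 * matT M (Z j)) := by rw [Matrix.mul_sub]
      _ = 𝒳 * (𝒜 * 𝒳 - 𝒜 * matT M (Z 0)) ^ (19 ^ j) := by rw [h3]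
  have hE0 : matT M (mprod M A X - mprod M A (Z 0)) = 𝒜 * 𝒳 - 𝒜 * matT M (Z 0) := by
    rw [matT_sub, matT_mprod hM, matT_mprod hM]
  have bound : ∀ j, frobNorm (matT M (X - Z j)) ≤
      frobNorm (matT M X) *
        frobNorm (matT M (mprod M A X - mprod M A (Z 0))) ^ (19 ^ j) := by
    intro j
    rw [hdiff j, hE0]
    obtain ⟨t, ht⟩ : ∃ t, 19 ^ j = t + 1 :=
      ⟨19 ^ j - 1, (Nat.succ_pred_eq_of_pos (pow_pos (by norm_num) j)).symm⟩
    rw [ht]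
    calc frobNorm (𝒳 * (𝒜 * 𝒳 - 𝒜 * matT M (Z 0)) ^ (t + 1))
        ≤ frobNorm 𝒳 * frobNorm ((𝒜 * 𝒳 - 𝒜 * matT M (Z 0)) ^ (t + 1)) :=
          frobNorm_mul_le _ _
      _ ≤ frobNorm 𝒳 * frobNorm (𝒜 * 𝒳 - 𝒜 * matT M (Z 0)) ^ (t + 1) :=
          mul_le_mul_of_nonneg_left (frobNorm_pow_le _ _) (frobNorm_nonneg _)
  refine ⟨bound, ?_⟩
  -- convergence
  have hr0 : 0 ≤ frobNorm (matT M (mprod M A X - mprod M A (Z 0))) := frobNorm_nonneg _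
  have hrt : Filter.Tendsto
      (fun j : ℕ => frobNorm (matT M (mprod M A X - mprod M A (Z 0))) ^ 19 ^ j)
      Filter.atTop (nhds 0) :=
    (tendsto_pow_atTop_nhds_zero_of_lt_one hr0 hinit).comp
      (tendsto_pow_atTop_atTop_of_one_lt (by norm_num))
  have hgt : Filter.Tendsto
      (fun j => frobNorm (matT M X) *
        frobNorm (matT M (mprod M A X - mprod M A (Z 0))) ^ 19 ^ j)
      Filter.atTop (nhds 0) := by
    have h := hrt.const_mul (frobNorm (matT M X))
    simpa using h
  have hg : Filter.Tendsto (fun j => frobNorm (matT M (X - Z j))) Filter.atTop (nhds 0) :=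
    squeeze_zero (fun j => frobNorm_nonneg _) bound hgt
  intro l i j
  have hhat : ∀ s, Filter.Tendsto (fun t => hatT M (X - Z t) s i j)
      Filter.atTop (nhds 0) := by
    intro s
    refine squeeze_zero_norm (fun t => ?_) hg
    have h := entry_le_frobNorm (matT M (X - Z t)) (i, s) (j, s)
    simpa only [matT, Matrix.blockDiagonal_apply_eq] using h
  have hrec2 : ∀ t, (X - Z t) l i j = ∑ s, M⁻¹ l s * hatT M (X - Z t) s i j := by
    intro t
    conv_lhs => rw [← hatT_entries_recover hM (X - Z t) l]
    simp [Finset.sum_apply, Matrix.sum_apply]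
  have hsum : Filter.Tendsto (fun t => (X - Z t) l i j) Filter.atTop (nhds 0) := by
    have h0 : Filter.Tendsto (fun t => ∑ s, M⁻¹ l s * hatT M (X - Z t) s i j)
        Filter.atTop (nhds (∑ _s : Fin p, (0 : ℂ))) :=
      tendsto_finset_sum _ fun s _ => by simpa using (hhat s).const_mul (M⁻¹ l s)
    simp only [Finset.sum_const_zero] at h0
    exact h0.congr fun t => (hrec2 t).symm
  have hfin := (tendsto_const_nhds (x := X l i j) (f := Filter.atTop)).sub hsum
  rw [sub_zero] at hfin
  refine hfin.congr fun t => ?_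
  simp [sub_sub_cancel]
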